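/- arXiv:1207.2462 — 6 statements merged into one kernel-verified Lean document; each statement's English description precedes it below -/
import Mathlib

section
/- Let p₁ ≤_B p₂ ≤_B p₃ and let a ∈ A \ B. If q₁ →a p₁, q₁ →a p₂, and q₂ →a p₂, and furthermore q₁ and q₂ have exactly these a-successors among {p₁,p₂} (i.e., q₁ and q₂ are otherwise identical: their transitions and termination options coincide apart from these a-transitions), then q₁ ≃_B q₂. In particular, adding a transition to a little brother p₁ of p₂ to a state already having an a-transition to p₂ does not change its partial bisimilarity class. -/
variable {S A : Type*}

/-- R is a partial bisimulation w.r.t. the bisimulation action set B. -/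
def IsPB (tm : S → Prop) (tr : S → A → S → Prop) (B : Set A)
    (R : S → S → Prop) : Prop :=
  ∀ p q, R p q →
    (tm p → tm q) ∧
    (∀ a p', tr p a p' → ∃ q', tr q a q' ∧ R p' q') ∧
    (∀ b q', b ∈ B → tr q b q' → ∃ p', tr p b p' ∧ R p' q')

/-- The partial bisimilarity preorder ≤_B. -/
def PbLe (tm : S → Prop) (tr : S → A → S → Prop) (B : Set A) (p q : S) : Prop :=
  ∃ R, IsPB tm tr B R ∧ R p q

/-- R is a simulation. -/
def IsSim (tm : S → Prop) (tr : S → A → S → Prop) (R : S → S → Prop) : Prop :=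
  ∀ p q, R p q →
    (tm p → tm q) ∧
    (∀ a p', tr p a p' → ∃ q', tr q a q' ∧ R p' q')

/-- Strong similarity preorder. -/
def SimLe (tm : S → Prop) (tr : S → A → S → Prop) (p q : S) : Prop :=
  ∃ R, IsSim tm tr R ∧ R p q

/-- R is a bisimulation: R and its inverse are simulations. -/
def IsBisim (tm : S → Prop) (tr : S → A → S → Prop) (R : S → S → Prop) : Prop :=
  IsSim tm tr R ∧ IsSim tm tr (fun p q => R q p)

/-- Strong bisimilarity. -/
def Bisimilar (tm : S → Prop) (tr : S → A → S → Prop) (p q : S) : Prop :=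
  ∃ R, IsBisim tm tr R ∧ R p q

/-- A strong bisimulation: a symmetric relation matching termination and transitions. -/
def IsStrongBisim (tm : S → Prop) (tr : S → A → S → Prop) (R : S → S → Prop) : Prop :=
  Symmetric R ∧ ∀ p q, R p q →
    (tm p ↔ tm q) ∧
    (∀ a p', tr p a p' → ∃ q', tr q a q' ∧ R p' q')

/-- P is a partition of S: nonempty, covering, pairwise-disjoint classes. -/
def IsPartition' (P : Set (Set S)) : Prop :=
  (∀ Q ∈ P, Q.Nonempty) ∧ (∀ s : S, ∃ Q ∈ P, s ∈ Q) ∧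
  (∀ Q ∈ P, ∀ R ∈ P, (Q ∩ R).Nonempty → Q = R)

/-- Partition-relation pair: a partition with a partial order on its classes. -/
def IsPRP (P : Set (Set S)) (le : Set S → Set S → Prop) : Prop :=
  IsPartition' P ∧
  (∀ Q R, le Q R → Q ∈ P ∧ R ∈ P) ∧
  (∀ Q ∈ P, le Q Q) ∧
  (∀ Q R, le Q R → le R Q → Q = R) ∧
  (∀ Q R T, le Q R → le R T → le Q T)

/-- Every state of P has an a-transition into X. -/
def AllTr (tr : S → A → S → Prop) (a : A) (P X : Set S) : Prop :=
  ∀ p ∈ P, ∃ x ∈ X, tr p a x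

/-- Some state of P has an a-transition into X. -/
def ExTr (tr : S → A → S → Prop) (a : A) (P X : Set S) : Prop :=
  ∃ p ∈ P, ∃ x ∈ X, tr p a x

/-- bb(R): union of all big brother classes of R. -/
def bigBro (P : Set (Set S)) (le : Set S → Set S → Prop) (R : Set S) : Set S :=
  {x | ∃ Q ∈ P, le R Q ∧ x ∈ Q}

/-- lb(R): union of all little brother classes of R. -/
def litBro (P : Set (Set S)) (le : Set S → Set S → Prop) (R : Set S) : Set S :=
  {x | ∃ Q ∈ P, le Q R ∧ x ∈ Q}

/-- Stability of a partition-relation pair (Definition of stability conditions a-d). -/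
def IsStable (tm : S → Prop) (tr : S → A → S → Prop) (B : Set A)
    (P : Set (Set S)) (le : Set S → Set S → Prop) : Prop :=
  (∀ Q ∈ P, (∀ q ∈ Q, tm q) ∨ (∀ q ∈ Q, ¬ tm q)) ∧
  (∀ Q R, le Q R → (∀ q ∈ Q, tm q) → (∀ r ∈ R, tm r)) ∧
  (∀ Q Q' R, R ∈ P → le Q Q' → ∀ a, ExTr tr a Q R → AllTr tr a Q' (bigBro P le R)) ∧
  (∀ Q Q' R, R ∈ P → le Q Q' → ∀ b ∈ B, ExTr tr b Q' R → AllTr tr b Q (litBro P le R))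

/-- The order ◁ on partition-relation pairs. -/
def Lhd (P₁ : Set (Set S)) (le₁ : Set S → Set S → Prop)
    (P₂ : Set (Set S)) (le₂ : Set S → Set S → Prop) : Prop :=
  ∀ Q R, le₁ Q R → ∃ Q' ∈ P₂, ∃ R' ∈ P₂, Q ⊆ Q' ∧ R ⊆ R' ∧ le₂ Q' R'

/-- The relation on states induced by a partition-relation pair. -/
def IndRel (P : Set (Set S)) (le : Set S → Set S → Prop) (p q : S) : Prop :=
  ∃ Q ∈ P, ∃ R ∈ P, le Q R ∧ p ∈ Q ∧ q ∈ R

/-- Equivalence classes of the equivalence kernel R ∩ R⁻¹ of a preorder R. -/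
def eqClasses (R : S → S → Prop) : Set (Set S) :=
  {C | ∃ p, C = {q | R p q ∧ R q p}}

/-- The class order induced by a preorder R on its equivalence classes. -/
def classLe (R : S → S → Prop) (Q T : Set S) : Prop :=
  Q ∈ eqClasses R ∧ T ∈ eqClasses R ∧ ∃ p ∈ Q, ∃ q ∈ T, R p q

/-- The little brother relation ≤' induced on a parent partition P'. -/
def IndLe (le : Set S → Set S → Prop) (P' : Set (Set S)) (Q' R' : Set S) : Prop :=
  Q' ∈ P' ∧ R' ∈ P' ∧ ∃ Q R, le Q R ∧ Q ⊆ Q' ∧ R ⊆ R'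

/-- bb'(R') with respect to a parent partition. -/
def bigBro' (le : Set S → Set S → Prop) (P' : Set (Set S)) (R' : Set S) : Set S :=
  {x | ∃ Q' ∈ P', IndLe le P' R' Q' ∧ x ∈ Q'}

/-- lb'(R') with respect to a parent partition. -/
def litBro' (le : Set S → Set S → Prop) (P' : Set (Set S)) (R' : Set S) : Set S :=
  {x | ∃ Q' ∈ P', IndLe le P' Q' R' ∧ x ∈ Q'}

/-- Stability conditions 1-4 of (P, le) with respect to a parent partition P'. -/
def StableWrt (tm : S → Prop) (tr : S → A → S → Prop) (B : Set A)
    (P : Set (Set S)) (le : Set S → Set S → Prop) (P' : Set (Set S)) : Prop :=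
  (∀ Q ∈ P, ∀ a, ∀ R' ∈ P', ExTr tr a Q R' → AllTr tr a Q (bigBro' le P' R')) ∧
  (∀ Q ∈ P, ∀ b ∈ B, ∀ R' ∈ P', ExTr tr b Q R' → AllTr tr b Q (litBro' le P' R')) ∧
  (∀ Q T, le Q T → ∀ a, ∀ R' ∈ P', AllTr tr a Q R' → AllTr tr a T (bigBro' le P' R')) ∧
  (∀ Q T, le Q T → ∀ b ∈ B, ∀ R' ∈ P', AllTr tr b T R' → AllTr tr b Q (litBro' le P' R'))

/-- P' is a parent partition of P. -/
def IsParent (P P' : Set (Set S)) : Prop :=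
  IsPartition' P' ∧ ∀ Q ∈ P, ∃ Q' ∈ P', Q ⊆ Q'

/-- The partition obtained by splitting the class P₀ of P' into S' and P₀ \ S'. -/
def splitPart (P' : Set (Set S)) (P₀ Sp : Set S) : Set (Set S) :=
  (P' \ {P₀}) ∪ {Sp, P₀ \ Sp}

/-- Some le-related pair of classes lies inside (X, Y). -/
def relBetween (le : Set S → Set S → Prop) (X Y : Set S) : Prop :=
  ∃ Q R, le Q R ∧ Q ⊆ X ∧ R ⊆ Y

/-- Sp is a splitter of the class P₀ of the parent partition P' with respect to P. -/
def IsSplitter (P : Set (Set S)) (le : Set S → Set S → Prop)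
    (P' : Set (Set S)) (P₀ Sp : Set S) : Prop :=
  P₀ ∈ P' ∧ Sp ⊆ P₀ ∧ Sp.Nonempty ∧ (P₀ \ Sp).Nonempty ∧
  (∀ Q ∈ P, Q ⊆ Sp ∨ Q ∩ Sp = ∅) ∧
  (relBetween le Sp (P₀ \ Sp) ∨
    (¬ relBetween le Sp (P₀ \ Sp) ∧ ¬ relBetween le (P₀ \ Sp) Sp))

/-- (Pr, ler) is the result Refine(P, le, P', Sp): the ◁-coarsest pair ◁-below (P, le)
stable with respect to the split parent partition. -/
def IsRefineOf (tm : S → Prop) (tr : S → A → S → Prop) (B : Set A)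
    (P : Set (Set S)) (le : Set S → Set S → Prop)
    (P' : Set (Set S)) (P₀ Sp : Set S)
    (Pr : Set (Set S)) (ler : Set S → Set S → Prop) : Prop :=
  IsPRP Pr ler ∧ Lhd Pr ler P le ∧
  StableWrt tm tr B Pr ler (splitPart P' P₀ Sp) ∧
  ∀ Q lq, IsPRP Q lq → Lhd Q lq P le →
    StableWrt tm tr B Q lq (splitPart P' P₀ Sp) → Lhd Q lq Pr ler

/-- removing a transition to a little brother p₁ of p₂ over a
non-bisimulated action a ∉ B preserves the partial bisimilarity class. -/
theorem little_brother_nonbisim (tm : S → Prop) (tr : S → A → S → Prop) (B : Set A)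
    (a : A) (p₁ p₂ q₁ q₂ : S)
    (ha : a ∉ B)
    (h12 : PbLe tm tr B p₁ p₂)
    (hq1p1 : tr q₁ a p₁) (hq1p2 : tr q₁ a p₂) (hq2p2 : tr q₂ a p₂)
    (htm : tm q₁ ↔ tm q₂)
    (htr : ∀ c r, tr q₂ c r ↔ (tr q₁ c r ∧ ¬ (c = a ∧ r = p₁))) :
    PbLe tm tr B q₁ q₂ ∧ PbLe tm tr B q₂ q₁ := by
  obtain ⟨R₀, hR₀, hR₀p⟩ := h12
  constructor
  · refine ⟨fun p q => p = q ∨ (p = q₁ ∧ q = q₂) ∨ R₀ p q, ?_, Or.inr (Or.inl ⟨rfl, rfl⟩)⟩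
    rintro p q (rfl | ⟨rfl, rfl⟩ | h)
    · exact ⟨id, fun c r h => ⟨r, h, Or.inl rfl⟩,
        fun b r hb h => ⟨r, h, Or.inl rfl⟩⟩
    · refine ⟨htm.mp, ?_, ?_⟩
      · intro c r h
        by_cases hc : c = a ∧ r = p₁
        · obtain ⟨rfl, rfl⟩ := hc
          exact ⟨p₂, hq2p2, Or.inr (Or.inr hR₀p)⟩
        · exact ⟨r, (htr c r).mpr ⟨h, hc⟩, Or.inl rfl⟩
      · intro b r hb h
        exact ⟨r, ((htr b r).mp h).1, Or.inl rfl⟩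
    · obtain ⟨h1, h2, h3⟩ := hR₀ p q h
      refine ⟨h1, fun c r hr => ?_, fun b r hb hr => ?_⟩
      · obtain ⟨r', hr', hR⟩ := h2 c r hr
        exact ⟨r', hr', Or.inr (Or.inr hR)⟩
      · obtain ⟨r', hr', hR⟩ := h3 b r hb hr
        exact ⟨r', hr', Or.inr (Or.inr hR)⟩
  · refine ⟨fun p q => p = q ∨ (p = q₂ ∧ q = q₁), ?_, Or.inr ⟨rfl, rfl⟩⟩
    rintro p q (rfl | ⟨rfl, rfl⟩)
    · exact ⟨id, fun c r h => ⟨r, h, Or.inl rfl⟩,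
        fun b r hb h => ⟨r, h, Or.inl rfl⟩⟩
    · refine ⟨htm.mpr, ?_, ?_⟩
      · intro c r h
        exact ⟨r, ((htr c r).mp h).1, Or.inl rfl⟩
      · intro b r hb h
        refine ⟨r, (htr b r).mpr ⟨h, ?_⟩, Or.inl rfl⟩
        rintro ⟨rfl, rfl⟩
        exact ha hb
end

section
/- Let b ∈ B and p₁ ≤_B p₂ ≤_B p₃. Suppose q₁ has b-transitions to p₁, p₂, p₃ and q₂ has b-transitions to p₁ and p₃, with q₁ and q₂ otherwise identical (same remaining transitions and termination options). Then q₁ ≃_B q₂; i.e., for bisimulated actions, the middle brother p₂ may be removed provided both the littlest brother p₁ and biggest brother p₃ are kept. -/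
variable {S A : Type*}

lemma pbLe_refl (tm : S → Prop) (tr : S → A → S → Prop) (B : Set A) (p : S) :
    PbLe tm tr B p p := by
  refine ⟨Eq, ?_, rfl⟩
  intro x y h; subst h
  exact ⟨id, fun a p' h => ⟨p', h, rfl⟩, fun b q' _ h => ⟨q', h, rfl⟩⟩

lemma isPB_pbLe (tm : S → Prop) (tr : S → A → S → Prop) (B : Set A) :
    IsPB tm tr B (PbLe tm tr B) := by
  intro p q ⟨R, hR, hpq⟩
  obtain ⟨h1, h2, h3⟩ := hR p q hpq
  refine ⟨h1, fun a p' h => ?_, fun b q' hb h => ?_⟩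
  · obtain ⟨q', hq', hr⟩ := h2 a p' h
    exact ⟨q', hq', R, hR, hr⟩
  · obtain ⟨p', hp', hr⟩ := h3 b q' hb h
    exact ⟨p', hp', R, hR, hr⟩

/-- for a bisimulated action b ∈ B, the middle brother p₂ of
p₁ ≤_B p₂ ≤_B p₃ may be removed provided p₁ and p₃ are kept. -/
theorem little_brother_bisim (tm : S → Prop) (tr : S → A → S → Prop) (B : Set A)
    (b : A) (p₁ p₂ p₃ q₁ q₂ : S)
    (hb : b ∈ B)
    (h12 : PbLe tm tr B p₁ p₂) (h23 : PbLe tm tr B p₂ p₃)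
    (hq1p1 : tr q₁ b p₁) (hq1p2 : tr q₁ b p₂) (hq1p3 : tr q₁ b p₃)
    (hq2p1 : tr q₂ b p₁) (hq2p3 : tr q₂ b p₃)
    (htm : tm q₁ ↔ tm q₂)
    (htr : ∀ c r, tr q₂ c r ↔ (tr q₁ c r ∧ ¬ (c = b ∧ r = p₂))) :
    PbLe tm tr B q₁ q₂ ∧ PbLe tm tr B q₂ q₁ := by
  constructor
  · refine ⟨fun x y => PbLe tm tr B x y ∨ (x = q₁ ∧ y = q₂), ?_, Or.inr ⟨rfl, rfl⟩⟩
    intro p q hpq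
    rcases hpq with h | ⟨rfl, rfl⟩
    · obtain ⟨h1, h2, h3⟩ := isPB_pbLe tm tr B p q h
      exact ⟨h1, fun a p' ht => (h2 a p' ht).imp fun q' ⟨hq', hr⟩ => ⟨hq', Or.inl hr⟩,
        fun c q' hc ht => (h3 c q' hc ht).imp fun p' ⟨hp', hr⟩ => ⟨hp', Or.inl hr⟩⟩
    · refine ⟨htm.mp, fun a p' ht => ?_, fun c q' hc ht => ?_⟩
      · by_cases hcase : a = b ∧ p' = p₂
        · obtain ⟨rfl, rfl⟩ := hcase
          exact ⟨p₃, hq2p3, Or.inl h23⟩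
        · exact ⟨p', (htr a p').mpr ⟨ht, hcase⟩, Or.inl (pbLe_refl tm tr B p')⟩
      · exact ⟨q', ((htr c q').mp ht).1, Or.inl (pbLe_refl tm tr B q')⟩
  · refine ⟨fun x y => PbLe tm tr B x y ∨ (x = q₂ ∧ y = q₁), ?_, Or.inr ⟨rfl, rfl⟩⟩
    intro p q hpq
    rcases hpq with h | ⟨rfl, rfl⟩
    · obtain ⟨h1, h2, h3⟩ := isPB_pbLe tm tr B p q h
      exact ⟨h1, fun a p' ht => (h2 a p' ht).imp fun q' ⟨hq', hr⟩ => ⟨hq', Or.inl hr⟩,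
        fun c q' hc ht => (h3 c q' hc ht).imp fun p' ⟨hp', hr⟩ => ⟨hp', Or.inl hr⟩⟩
    · refine ⟨htm.mpr, fun a p' ht => ?_, fun c q' hc ht => ?_⟩
      · exact ⟨p', ((htr a p').mp ht).1, Or.inl (pbLe_refl tm tr B p')⟩
      · by_cases hcase : c = b ∧ q' = p₂
        · obtain ⟨rfl, rfl⟩ := hcase
          exact ⟨p₁, hq2p1, Or.inl h12⟩
        · exact ⟨q', (htr c q').mpr ⟨ht, hcase⟩, Or.inl (pbLe_refl tm tr B q')⟩
end

section
/- Every stable partition-relation pair induces a partial bisimulation preorder: if (P, ≤) is a stable partition-relation pair over G with respect to B, then the relation R = {(p,q) | p ∈ P, q ∈ Q for some classes P, Q ∈ P with P ≤ Q} is a partial bisimulation preorder with respect to B. -/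
variable {S A : Type*}

/-- a stable partition-relation pair induces a partial bisimulation
preorder. -/
theorem stable_induces_pb (tm : S → Prop) (tr : S → A → S → Prop) (B : Set A)
    (P : Set (Set S)) (le : Set S → Set S → Prop)
    (hprp : IsPRP P le) (hst : IsStable tm tr B P le) :
    IsPB tm tr B (IndRel P le) ∧ Reflexive (IndRel P le) ∧ Transitive (IndRel P le) := by
  obtain ⟨⟨hne, hcov, hdisj⟩, hdom, hrefl, _, htrans⟩ := hprp
  obtain ⟨hterm, htermle, hfwd, hbwd⟩ := hst
  refine ⟨?_, ?_, ?_⟩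
  · intro p q hpq
    obtain ⟨Q, hQ, R, hR, hle, hpQ, hqR⟩ := hpq
    refine ⟨?_, ?_, ?_⟩
    · intro htp
      rcases hterm Q hQ with h | h
      · exact htermle Q R hle h q hqR
      · exact absurd htp (h p hpQ)
    · intro a p' htr
      obtain ⟨R₀, hR₀, hp'R₀⟩ := hcov p'
      have hall := hfwd Q R R₀ hR₀ hle a ⟨p, hpQ, p', hp'R₀, htr⟩
      obtain ⟨q', hq'bb, htrq⟩ := hall q hqR
      obtain ⟨Q₁, hQ₁, hleQ₁, hq'Q₁⟩ := hq'bb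
      exact ⟨q', htrq, R₀, hR₀, Q₁, hQ₁, hleQ₁, hp'R₀, hq'Q₁⟩
    · intro b q' hb htr
      obtain ⟨R₀, hR₀, hq'R₀⟩ := hcov q'
      have hall := hbwd Q R R₀ hR₀ hle b hb ⟨q, hqR, q', hq'R₀, htr⟩
      obtain ⟨p', hp'lb, htrp⟩ := hall p hpQ
      obtain ⟨Q₁, hQ₁, hleQ₁, hp'Q₁⟩ := hp'lb
      exact ⟨p', htrp, Q₁, hQ₁, R₀, hR₀, hleQ₁, hp'Q₁, hq'R₀⟩
  · intro p
    obtain ⟨Q, hQ, hpQ⟩ := hcov p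
    exact ⟨Q, hQ, Q, hQ, hrefl Q hQ, hpQ, hpQ⟩
  · intro p q r hpq hqr
    obtain ⟨Q, hQ, R, hR, hle1, hpQ, hqR⟩ := hpq
    obtain ⟨R', hR', T, hT, hle2, hqR', hrT⟩ := hqr
    have : R = R' := hdisj R hR R' hR' ⟨q, hqR, hqR'⟩
    subst this
    exact ⟨Q, hQ, T, hT, htrans Q R T hle1 hle2, hpQ, hrT⟩
end

section
/- Every partial bisimulation preorder induces a stable partition-relation pair: if R is a partial bisimulation preorder over S with respect to B, ≃ = R ∩ R⁻¹, P = S/≃ the quotient partition, and ≤ defined on classes by [p] ≤ [q] iff (p,q) ∈ R, then (P, ≤) is a well-defined stable partition-relation pair. -/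
variable {S A : Type*}

/-- a partial bisimulation preorder induces a stable
partition-relation pair via its equivalence classes and class order. -/
theorem pb_induces_stable (tm : S → Prop) (tr : S → A → S → Prop) (B : Set A)
    (R : S → S → Prop)
    (hpb : IsPB tm tr B R) (hrefl : Reflexive R) (htrans : Transitive R) :
    IsPRP (eqClasses R) (classLe R) ∧ IsStable tm tr B (eqClasses R) (classLe R) := by
  have hclass : ∀ p : S, p ∈ ({q | R p q ∧ R q p} : Set S) := fun p => ⟨hrefl p, hrefl p⟩
  have hrel : ∀ {C : Set S} {p q : S}, C ∈ eqClasses R → p ∈ C → q ∈ C → R p q := by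
    rintro C p q ⟨x, rfl⟩ ⟨hxp, hpx⟩ ⟨hxq, hqx⟩
    exact htrans hpx hxq
  have hle_elem : ∀ {Q T : Set S}, classLe R Q T → ∀ p ∈ Q, ∀ q ∈ T, R p q := by
    rintro Q T ⟨hQ, hT, p₀, hp₀, q₀, hq₀, h⟩ p hp q hq
    exact htrans (hrel hQ hp hp₀) (htrans h (hrel hT hq₀ hq))
  constructor
  · refine ⟨⟨?_, ?_, ?_⟩, ?_, ?_, ?_, ?_⟩
    · rintro Q ⟨x, rfl⟩; exact ⟨x, hclass x⟩
    · intro s; exact ⟨{q | R s q ∧ R q s}, ⟨s, rfl⟩, hclass s⟩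
    · rintro Q ⟨x, rfl⟩ T ⟨y, rfl⟩ ⟨z, ⟨hxz, hzx⟩, ⟨hyz, hzy⟩⟩
      ext w
      simp only [Set.mem_setOf_eq]
      constructor
      · rintro ⟨hxw, hwx⟩
        exact ⟨htrans hyz (htrans hzx hxw), htrans hwx (htrans hxz hzy)⟩
      · rintro ⟨hyw, hwy⟩
        exact ⟨htrans hxz (htrans hzy hyw), htrans hwy (htrans hyz hzx)⟩
    · rintro Q T ⟨hQ, hT, _⟩; exact ⟨hQ, hT⟩
    · intro Q hQ
      obtain ⟨x, rfl⟩ := hQ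
      exact ⟨⟨x, rfl⟩, ⟨x, rfl⟩, x, hclass x, x, hclass x, hrefl x⟩
    · rintro Q T hQT hTQ
      obtain ⟨x, rfl⟩ := hQT.1
      obtain ⟨y, rfl⟩ := hQT.2.1
      have hxy : R x y := hle_elem hQT x (hclass x) y (hclass y)
      have hyx : R y x := hle_elem hTQ y (hclass y) x (hclass x)
      ext w
      simp only [Set.mem_setOf_eq]
      exact ⟨fun ⟨h1, h2⟩ => ⟨htrans hyx h1, htrans h2 hxy⟩,
        fun ⟨h1, h2⟩ => ⟨htrans hxy h1, htrans h2 hyx⟩⟩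
    · rintro Q T U hQT hTU
      obtain ⟨hQ, hT, p, hp, q, hq, hpq⟩ := hQT
      obtain ⟨-, hU, p', hp', u, hu, hp'u⟩ := hTU
      exact ⟨hQ, hU, p, hp, u, hu, htrans hpq (htrans (hrel hT hq hp') hp'u)⟩
  · refine ⟨?_, ?_, ?_, ?_⟩
    · rintro Q ⟨x, rfl⟩
      by_cases hx : tm x
      · exact Or.inl fun q ⟨hxq, _⟩ => (hpb x q hxq).1 hx
      · exact Or.inr fun q ⟨_, hqx⟩ htq => hx ((hpb q x hqx).1 htq)
    · intro Q T hQT hQtm r hr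
      obtain ⟨x, rfl⟩ := hQT.1
      exact (hpb x r (hle_elem hQT x (hclass x) r hr)).1 (hQtm x (hclass x))
    · rintro Q Q' R₀ hR₀ hle a ⟨p, hp, r, hr, htr⟩ q' hq'
      obtain ⟨s, hs, hrs⟩ := (hpb p q' (hle_elem hle p hp q' hq')).2.1 a r htr
      exact ⟨s, ⟨{t | R s t ∧ R t s}, ⟨s, rfl⟩,
        ⟨hR₀, ⟨s, rfl⟩, r, hr, s, hclass s, hrs⟩, hclass s⟩, hs⟩
    · rintro Q Q' R₀ hR₀ hle b hb ⟨q', hq', r, hr, htr⟩ p hp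
      obtain ⟨p', htr', hp'r⟩ := (hpb p q' (hle_elem hle p hp q' hq')).2.2 b r hb htr
      exact ⟨p', ⟨{t | R p' t ∧ R t p'}, ⟨p', rfl⟩,
        ⟨⟨p', rfl⟩, hR₀, p', hclass p', r, hr, hp'r⟩, hclass p'⟩, htr'⟩
end

section
/- A stable partition-relation pair is a fixed point of the refinement operator: if (P, ≤) is stable, then for every parent partition P' of P with P' ≠ P and every splitter S' of P' with respect to P, the refinement Refine(P, ≤, P', S') equals (P, ≤), i.e., the coarsest partition-relation pair ◁-below (P, ≤) that is stable with respect to the split parent partition P' \ {P₀} ∪ {S', P₀ \ S'} is (P, ≤) itself. -/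
variable {S A : Type*}

lemma mem_split_iff {P' : Set (Set S)} {P₀ Sp C : Set S} :
    C ∈ splitPart P' P₀ Sp ↔ (C ∈ P' ∧ C ≠ P₀) ∨ C = Sp ∨ C = P₀ \ Sp := by
  simp only [splitPart, Set.mem_union, Set.mem_diff, Set.mem_insert_iff,
    Set.mem_singleton_iff]

lemma split_disj {P : Set (Set S)} {le : Set S → Set S → Prop}
    {P' : Set (Set S)} {P₀ Sp : Set S}
    (hP' : IsPartition' P') (hsp : IsSplitter P le P' P₀ Sp) :
    ∀ C ∈ splitPart P' P₀ Sp, ∀ D ∈ splitPart P' P₀ Sp, (C ∩ D).Nonempty → C = D := by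
  obtain ⟨hP0, hSpSub, _, _, _, _⟩ := hsp
  intro C hC D hD hCD
  have hdisj := hP'.2.2
  rw [mem_split_iff] at hC hD
  have key : ∀ X, X ∈ P' → X ≠ P₀ → ∀ Y, Y ⊆ P₀ → (X ∩ Y).Nonempty → False := by
    rintro X hX hXne Y hY ⟨x, hx1, hx2⟩
    exact hXne (hdisj X hX P₀ hP0 ⟨x, hx1, hY hx2⟩)
  have hDSp : P₀ \ Sp ⊆ P₀ := Set.diff_subset
  rcases hC with ⟨hC1, hC2⟩ | hC | hC <;> rcases hD with ⟨hD1, hD2⟩ | hD | hD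
  · exact hdisj C hC1 D hD1 hCD
  · exact absurd (key C hC1 hC2 Sp hSpSub (hD ▸ hCD)) not_false
  · exact absurd (key C hC1 hC2 (P₀ \ Sp) hDSp (hD ▸ hCD)) not_false
  · rw [hC] at hCD
    rcases hCD with ⟨x, hx1, hx2⟩
    exact absurd (key D hD1 hD2 Sp hSpSub ⟨x, hx2, hx1⟩) not_false
  · rw [hC, hD]
  · rw [hC, hD] at hCD
    rcases hCD with ⟨x, hx1, hx2⟩
    exact absurd hx1 hx2.2
  · rw [hC] at hCD
    rcases hCD with ⟨x, hx1, hx2⟩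
    exact absurd (key D hD1 hD2 (P₀ \ Sp) hDSp ⟨x, hx2, hx1⟩) not_false
  · rw [hC, hD] at hCD
    rcases hCD with ⟨x, hx1, hx2⟩
    exact absurd hx2 hx1.2
  · rw [hC, hD]

lemma split_cover {P : Set (Set S)} {le : Set S → Set S → Prop}
    {P' : Set (Set S)} {P₀ Sp : Set S}
    (hpar : IsParent P P') (hsp : IsSplitter P le P' P₀ Sp) :
    ∀ Q ∈ P, ∃ C ∈ splitPart P' P₀ Sp, Q ⊆ C := by
  intro Q hQ
  obtain ⟨Q', hQ'mem, hQsub⟩ := hpar.2 Q hQ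
  by_cases h : Q' = P₀
  · rw [h] at hQsub
    rcases hsp.2.2.2.2.1 Q hQ with h1 | h1
    · exact ⟨Sp, by rw [mem_split_iff]; tauto, h1⟩
    · refine ⟨P₀ \ Sp, by rw [mem_split_iff]; tauto, fun x hx => ⟨hQsub hx, fun hxs => ?_⟩⟩
      exact Set.eq_empty_iff_forall_notMem.mp h1 x ⟨hx, hxs⟩
  · exact ⟨Q', by rw [mem_split_iff]; tauto, hQsub⟩

/-- If a class R of P meets a class R' of the split partition, then R ⊆ R'. -/
lemma class_sub_split {P : Set (Set S)} {le : Set S → Set S → Prop}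
    {P' : Set (Set S)} {P₀ Sp : Set S}
    (hpar : IsParent P P') (hsp : IsSplitter P le P' P₀ Sp)
    {R R' : Set S} (hR : R ∈ P) (hR' : R' ∈ splitPart P' P₀ Sp)
    (hmeet : (R ∩ R').Nonempty) : R ⊆ R' := by
  obtain ⟨C, hC, hRC⟩ := split_cover hpar hsp R hR
  rcases hmeet with ⟨x, hx1, hx2⟩
  have := split_disj hpar.1 hsp C hC R' hR' ⟨x, hRC hx1, hx2⟩
  exact this ▸ hRC

/-- a stable partition-relation pair is a fixed point of the
refinement operator. -/
theorem stable_fixed_point (tm : S → Prop) (tr : S → A → S → Prop) (B : Set A)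
    (P : Set (Set S)) (le : Set S → Set S → Prop)
    (P' : Set (Set S)) (P₀ Sp : Set S)
    (hprp : IsPRP P le) (hst : IsStable tm tr B P le)
    (hpar : IsParent P P') (hne : P' ≠ P)
    (hsp : IsSplitter P le P' P₀ Sp) :
    IsRefineOf tm tr B P le P' P₀ Sp P le := by
  obtain ⟨hpart, hdom, hrefl, hanti, htrans⟩ := hprp
  obtain ⟨_, _, hc, hd⟩ := hst
  set Ps := splitPart P' P₀ Sp with hPs
  -- lifting big/little brothers from P to the split parent partition
  have hbig : ∀ R R' : Set S, R ∈ P → R' ∈ Ps → R ⊆ R' →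
      bigBro P le R ⊆ bigBro' le Ps R' := by
    rintro R R' hR hR' hsub x ⟨T, hT, hleRT, hxT⟩
    obtain ⟨T', hT', hTT'⟩ := split_cover hpar hsp T hT
    exact ⟨T', hT', ⟨hR', hT', R, T, hleRT, hsub, hTT'⟩, hTT' hxT⟩
  have hlit : ∀ R R' : Set S, R ∈ P → R' ∈ Ps → R ⊆ R' →
      litBro P le R ⊆ litBro' le Ps R' := by
    rintro R R' hR hR' hsub x ⟨T, hT, hleTR, hxT⟩
    obtain ⟨T', hT', hTT'⟩ := split_cover hpar hsp T hT
    exact ⟨T', hT', ⟨hT', hR', T, R, hleTR, hTT', hsub⟩, hTT' hxT⟩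
  -- an existential transition into a split class factors through a class of P
  have ex_class : ∀ (a : A) (Q R' : Set S), R' ∈ Ps → ExTr tr a Q R' →
      ∃ R ∈ P, R ⊆ R' ∧ ExTr tr a Q R := by
    rintro a Q R' hR' ⟨q, hq, r, hr, htr⟩
    obtain ⟨R, hR, hrR⟩ := hpart.2.1 r
    exact ⟨R, hR, class_sub_split hpar hsp hR hR' ⟨r, hrR, hr⟩, q, hq, r, hrR, htr⟩
  have mono : ∀ (a : A) (Q X Y : Set S), X ⊆ Y → AllTr tr a Q X → AllTr tr a Q Y := by
    rintro a Q X Y hXY hall p hp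
    obtain ⟨x, hx, ht⟩ := hall p hp
    exact ⟨x, hXY hx, ht⟩
  refine ⟨⟨hpart, hdom, hrefl, hanti, htrans⟩, ?_, ⟨?_, ?_, ?_, ?_⟩, ?_⟩
  · -- Lhd P le P le
    intro Q R h
    exact ⟨Q, (hdom Q R h).1, R, (hdom Q R h).2, subset_rfl, subset_rfl, h⟩
  · -- condition 1
    intro Q hQ a R' hR' hex
    obtain ⟨R, hR, hsub, hexR⟩ := ex_class a Q R' hR' hex
    exact mono a Q _ _ (hbig R R' hR hR' hsub) (hc Q Q R hR (hrefl Q hQ) a hexR)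
  · -- condition 2
    intro Q hQ b hb R' hR' hex
    obtain ⟨R, hR, hsub, hexR⟩ := ex_class b Q R' hR' hex
    exact mono b Q _ _ (hlit R R' hR hR' hsub) (hd Q Q R hR (hrefl Q hQ) b hb hexR)
  · -- condition 3
    intro Q T hle a R' hR' hall
    have hQP : Q ∈ P := (hdom Q T hle).1
    obtain ⟨q, hq⟩ := hpart.1 Q hQP
    obtain ⟨r, hr, htr⟩ := hall q hq
    obtain ⟨R, hR, hsub, hexR⟩ := ex_class a Q R' hR' ⟨q, hq, r, hr, htr⟩
    exact mono a T _ _ (hbig R R' hR hR' hsub) (hc Q T R hR hle a hexR)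
  · -- condition 4
    intro Q T hle b hb R' hR' hall
    have hTP : T ∈ P := (hdom Q T hle).2
    obtain ⟨t, ht⟩ := hpart.1 T hTP
    obtain ⟨r, hr, htr⟩ := hall t ht
    obtain ⟨R, hR, hsub, hexR⟩ := ex_class b T R' hR' ⟨t, ht, r, hr, htr⟩
    exact mono b Q _ _ (hlit R R' hR hR' hsub) (hd Q T R hR hle b hb hexR)
  · -- maximality: trivial since Pr = P
    intro Q lq _ h _
    exact h
end

section
/- The refinement operator is monotone with respect to ◁: if (P₁, ≤₁) ◁ (P₂, ≤₂), P' is a parent partition of P₂, and S' is a splitter of P' with respect to P₂, then Refine(P₁, ≤₁, P', S') ◁ Refine(P₂, ≤₂, P', S'). -/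
variable {S A : Type*}

/-- the refinement operator is ◁-monotone. -/
theorem refine_monotone (tm : S → Prop) (tr : S → A → S → Prop) (B : Set A)
    (P₁ : Set (Set S)) (le₁ : Set S → Set S → Prop)
    (P₂ : Set (Set S)) (le₂ : Set S → Set S → Prop)
    (P' : Set (Set S)) (P₀ Sp : Set S)
    (Pr₁ : Set (Set S)) (ler₁ : Set S → Set S → Prop)
    (Pr₂ : Set (Set S)) (ler₂ : Set S → Set S → Prop)
    (h₁ : IsPRP P₁ le₁) (h₂ : IsPRP P₂ le₂)
    (hl : Lhd P₁ le₁ P₂ le₂)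
    (hpar : IsParent P₂ P') (hsp : IsSplitter P₂ le₂ P' P₀ Sp)
    (hr₁ : IsRefineOf tm tr B P₁ le₁ P' P₀ Sp Pr₁ ler₁)
    (hr₂ : IsRefineOf tm tr B P₂ le₂ P' P₀ Sp Pr₂ ler₂) :
    Lhd Pr₁ ler₁ Pr₂ ler₂ := by
  apply hr₂.2.2.2 Pr₁ ler₁ hr₁.1 _ hr₁.2.2.1
  intro Q R hQR
  obtain ⟨Q', hQ', R', hR', hQsub, hRsub, hle⟩ := hr₁.2.1 Q R hQR
  obtain ⟨Q'', hQ'', R'', hR'', hQs2, hRs2, hle2⟩ := hl Q' R' hle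
  exact ⟨Q'', hQ'', R'', hR'', hQsub.trans hQs2, hRsub.trans hRs2, hle2⟩
end
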